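/- Under the same assumptions, F_∞(1) = -(F_N(-D+1)/f_N(-D)) F_∞(0) - (E[S_N]/f_N(-D)) Π_{j=1}^{D-1}(α_j - 1)^{-1} · (e_{D-1}(α) - e_{D-2}(α)), where e_k(α) denotes the k-th elementary symmetric polynomial in α_1, ..., α_{D-1}. -/

import Mathlib

/-- Closed form for `F_∞(1)`:
`F_∞(1) = -(F_N(-D+1)/f_N(-D)) F_∞(0) - (E[S_N]/f_N(-D)) ∏_j (α_j-1)⁻¹ (e_{D-1}(α) - e_{D-2}(α))`,
where `e_k` is the `k`-th elementary symmetric polynomial of the simple roots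
`α_1, …, α_{D-1}` of `G_N(s) = 1` in the punctured closed unit disk. -/
theorem Finfty_one_closed_form (D : ℕ) (hD : 2 ≤ D)
    (f : ℤ → ℝ) (hf0 : ∀ j, 0 ≤ f j)
    (hfsupp : ∀ j : ℤ, j < -(D : ℤ) → f j = 0)
    (hfD : 0 < f (-(D : ℤ)))
    (hfsum : HasSum (fun k : ℕ => f ((k : ℤ) - D)) 1)
    (FN : ℤ → ℝ) (hFN : ∀ k : ℤ, HasSum (fun n : ℕ => f (k - n)) (FN k))
    (ES : ℝ) (hES : HasSum (fun k : ℕ => ((k : ℝ) - D) * f ((k : ℤ) - D)) ES)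
    (hESneg : ES < 0)
    (α : Fin (D - 1) → ℂ) (hαinj : Function.Injective α)
    (hαroot : ∀ i, ‖α i‖ ≤ 1 ∧ α i ≠ 1 ∧
      (∑' k : ℕ, (f ((k : ℤ) - D) : ℂ) * α i ^ k) = α i ^ D)
    (v : ℕ → ℝ) (hv01 : ∀ j, 0 ≤ v j ∧ v j ≤ 1)
    (hsys : ∀ i, ∑ j ∈ Finset.range D, (v j : ℂ) *
      ∑ x ∈ Finset.Icc j (D - 1), (f ((x : ℤ) - D - j) : ℂ) * α i ^ x = 0)
    (hlast : ∑ j ∈ Finset.range D, v j * FN (-(j : ℤ) - 1) = -ES)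
    (hv0 : (v 0 : ℂ) = ((-ES / f (-(D : ℤ))) : ℝ) * ∏ j : Fin (D - 1), α j / (α j - 1))
    (e : ℕ → ℂ)
    (he : ∀ k : ℕ, e k = ∑ t ∈ (Finset.univ : Finset (Fin (D - 1))).powersetCard k,
      ∏ j ∈ t, α j) :
    (v 1 : ℂ) = -((FN (-(D : ℤ) + 1) / f (-(D : ℤ))) : ℝ) * (v 0 : ℂ)
      - ((ES / f (-(D : ℤ))) : ℝ) * (∏ j : Fin (D - 1), (α j - 1)⁻¹)
        * (e (D - 1) - e (D - 2)) := by
  classical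
  have hfD0 : (f (-(D : ℤ)) : ℂ) ≠ 0 := by exact_mod_cast ne_of_gt hfD
  -- roots are nonzero and ≠ 1
  have hα0 : ∀ i, α i ≠ 0 := by
    intro i h0
    have h := (hαroot i).2.2
    rw [h0] at h
    have ht : (∑' k : ℕ, (f ((k : ℤ) - D) : ℂ) * (0 : ℂ) ^ k) = (f (-(D : ℤ)) : ℂ) := by
      rw [tsum_eq_single 0 (by intro k hk; simp [zero_pow hk])]
      norm_num
    rw [ht, zero_pow (by omega : D ≠ 0)] at h
    exact hfD0 h
  have hα1 : ∀ i, α i - 1 ≠ 0 := fun i => sub_ne_zero.mpr (hαroot i).2.1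
  have hcard : (Finset.univ : Finset (Fin (D - 1))).card = D - 1 := by simp
  have heprod : e (D - 1) = ∏ j : Fin (D - 1), α j := by
    have hps : Finset.powersetCard (D - 1) (Finset.univ : Finset (Fin (D - 1)))
        = {Finset.univ} := by
      ext t
      simp only [Finset.mem_powersetCard, Finset.mem_singleton]
      constructor
      · rintro ⟨-, ht⟩
        exact Finset.eq_univ_of_card t (by rw [ht, Fintype.card_fin])
      · rintro rfl
        exact ⟨Finset.subset_univ _, by simp⟩
    rw [he, hps, Finset.sum_singleton]
  have heprod_ne : e (D - 1) ≠ 0 := by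
    rw [heprod]; exact Finset.prod_ne_zero_iff.mpr fun i _ => hα0 i
  set Pm : ℂ := ∏ j : Fin (D - 1), (α j - 1) with hPm
  have hPmne : Pm ≠ 0 := Finset.prod_ne_zero_iff.mpr fun i _ => hα1 i
  -- the polynomial
  set P : Polynomial ℂ := ∑ j ∈ Finset.range D, Polynomial.C (v j : ℂ) *
      ∑ x ∈ Finset.Icc j (D - 1), Polynomial.C ((f ((x : ℤ) - D - j)) : ℂ) * Polynomial.X ^ x
    with hP
  have hProot : ∀ i, P.eval (α i) = 0 := by
    intro i
    rw [hP]
    simp only [Polynomial.eval_finset_sum, Polynomial.eval_mul, Polynomial.eval_C,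
      Polynomial.eval_pow, Polynomial.eval_X]
    exact hsys i
  have hPdeg : P.natDegree ≤ D - 1 := by
    apply Polynomial.natDegree_sum_le_of_forall_le
    intro j _
    refine (Polynomial.natDegree_C_mul_le _ _).trans ?_
    apply Polynomial.natDegree_sum_le_of_forall_le
    intro x hx
    exact (Polynomial.natDegree_C_mul_X_pow_le _ _).trans (Finset.mem_Icc.mp hx).2
  have hcoeff : ∀ n, P.coeff n = ∑ j ∈ Finset.range D,
      (v j : ℂ) * ∑ x ∈ Finset.Icc j (D - 1),
        (f ((x : ℤ) - D - j) : ℂ) * (if n = x then 1 else 0) := by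
    intro n
    rw [hP, Polynomial.finset_sum_coeff]
    refine Finset.sum_congr rfl fun j _ => ?_
    rw [Polynomial.coeff_C_mul, Polynomial.finset_sum_coeff]
    refine congrArg _ (Finset.sum_congr rfl fun x _ => ?_)
    rw [Polynomial.coeff_C_mul, Polynomial.coeff_X_pow]
  have h0 : P.coeff 0 = (v 0 : ℂ) * (f (-(D : ℤ)) : ℂ) := by
    rw [hcoeff 0, Finset.sum_eq_single 0]
    · rw [Finset.sum_eq_single 0]
      · norm_num
      · intro x _ hx0; simp [Ne.symm hx0]
      · intro h; exact absurd (Finset.mem_Icc.mpr ⟨le_refl 0, by omega⟩) h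
    · intro j _ hj0
      rw [Finset.sum_eq_zero, mul_zero]
      intro x hx
      have hxne : x ≠ 0 := by have := (Finset.mem_Icc.mp hx).1; omega
      simp [Ne.symm hxne]
    · intro h; exact absurd (Finset.mem_range.mpr (by omega)) h
  have h1 : P.coeff 1 = (v 0 : ℂ) * (f (1 - (D : ℤ)) : ℂ) + (v 1 : ℂ) * (f (-(D : ℤ)) : ℂ) := by
    rw [hcoeff 1]
    rw [← Finset.sum_subset (Finset.range_subset_range.mpr hD) (fun j _ hj2 => by
      rw [Finset.sum_eq_zero, mul_zero]
      intro x hx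
      have hj2' : 2 ≤ j := by simpa [Nat.lt_iff_add_one_le] using hj2
      have hxne : x ≠ 1 := by have := (Finset.mem_Icc.mp hx).1; omega
      simp [Ne.symm hxne])]
    rw [Finset.sum_range_succ, Finset.sum_range_one]
    congr 1
    · rw [Finset.sum_eq_single 1]
      · norm_num
      · intro x _ hx1; simp [Ne.symm hx1]
      · intro h; exact absurd (Finset.mem_Icc.mpr ⟨by omega, by omega⟩) h
    · rw [Finset.sum_eq_single 1]
      · norm_num
      · intro x _ hx1; simp [Ne.symm hx1]
      · intro h; exact absurd (Finset.mem_Icc.mpr ⟨le_refl 1, by omega⟩) h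
  -- v 0 ≠ 0, hence P ≠ 0
  have hv0ne : (v 0 : ℂ) ≠ 0 := by
    rw [hv0]
    apply mul_ne_zero
    · exact_mod_cast ne_of_gt (div_pos (neg_pos.mpr hESneg) hfD)
    · exact Finset.prod_ne_zero_iff.mpr fun i _ => div_ne_zero (hα0 i) (hα1 i)
  have hPne : P ≠ 0 := by
    intro h
    rw [h, Polynomial.coeff_zero] at h0
    rcases mul_eq_zero.mp h0.symm with h' | h'
    · exact hv0ne h'
    · exact hfD0 h'
  -- factorization
  set R : Polynomial ℂ := ∏ i : Fin (D - 1), (Polynomial.X - Polynomial.C (α i)) with hR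
  have hRmonic : R.Monic :=
    Polynomial.monic_prod_of_monic _ _ fun i _ => Polynomial.monic_X_sub_C _
  have hRdeg : R.natDegree = D - 1 := by
    rw [hR, Polynomial.natDegree_prod_of_monic _ _ fun i _ => Polynomial.monic_X_sub_C _]
    simp
  have hdvd : R ∣ P := by
    rw [hR]
    apply Finset.prod_dvd_of_coprime
    · intro a _ b hb hab
      exact Polynomial.isCoprime_X_sub_C_of_isUnit_sub
        (isUnit_iff_ne_zero.mpr (sub_ne_zero.mpr fun h => hab (hαinj h)))
    · intro i _
      exact Polynomial.dvd_iff_isRoot.mpr (hProot i)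
  obtain ⟨u, hu⟩ := hdvd
  have hune : u ≠ 0 := fun h => hPne (by rw [hu, h, mul_zero])
  have hudeg : u.natDegree = 0 := by
    have hmul := Polynomial.natDegree_mul (hRmonic.ne_zero) hune
    rw [← hu, hRdeg] at hmul
    omega
  obtain ⟨c, hc⟩ := Polynomial.natDegree_eq_zero.mp hudeg
  rw [← hc] at hu
  have hmulc : ∀ n, P.coeff n = R.coeff n * c := by
    intro n; rw [hu, Polynomial.coeff_mul_C]
  -- Vieta
  have hRcoeff : ∀ k, k ≤ D - 1 → R.coeff k = (-1) ^ (D - 1 - k) * e (D - 1 - k) := by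
    intro k hk
    have hcard2 : Multiset.card ((Finset.univ : Finset (Fin (D - 1))).val.map α) = D - 1 := by
      simp
    have hRR : R = (((Finset.univ : Finset (Fin (D - 1))).val.map α).map fun t =>
        Polynomial.X - Polynomial.C t).prod := by
      rw [hR, Finset.prod, Multiset.map_map]
      rfl
    rw [hRR, Multiset.prod_X_sub_C_coeff _ (by rw [hcard2]; exact hk), hcard2, he]
    congr 1
    rw [Finset.esymm_map_val]
  have eq0 : (v 0 : ℂ) * (f (-(D : ℤ)) : ℂ) = ((-1 : ℂ) ^ (D - 1) * e (D - 1)) * c := by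
    rw [← h0, hmulc 0, hRcoeff 0 (Nat.zero_le _)]
    norm_num
  have eq1 : (v 0 : ℂ) * (f (1 - (D : ℤ)) : ℂ) + (v 1 : ℂ) * (f (-(D : ℤ)) : ℂ)
      = ((-1 : ℂ) ^ (D - 2) * e (D - 2)) * c := by
    rw [← h1, hmulc 1, hRcoeff 1 (by omega), (show D - 1 - 1 = D - 2 by omega)]
  have hε : ((-1 : ℂ) ^ (D - 1)) = -((-1 : ℂ) ^ (D - 2)) := by
    rw [(show D - 1 = (D - 2) + 1 by omega), pow_succ]; ring
  rw [hε] at eq0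
  set ε : ℂ := (-1 : ℂ) ^ (D - 2) with hεdef
  have hεc : ε * c * e (D - 1) = -((v 0 : ℂ) * (f (-(D : ℤ)) : ℂ)) := by
    linear_combination eq0
  have hv1 : (v 1 : ℂ) * (f (-(D : ℤ)) : ℂ) * e (D - 1)
      = -(v 0 : ℂ) * (f (-(D : ℤ)) : ℂ) * e (D - 2)
        - (v 0 : ℂ) * (f (1 - (D : ℤ)) : ℂ) * e (D - 1) := by
    linear_combination e (D - 1) * eq1 + e (D - 2) * hεc
  have hv0' : (v 0 : ℂ) * (f (-(D : ℤ)) : ℂ) * Pm = -(ES : ℂ) * e (D - 1) := by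
    rw [hv0, Finset.prod_div_distrib, ← heprod, ← hPm]
    push_cast
    field_simp
  -- value of FN at -D+1
  have hFN1 : FN (-(D : ℤ) + 1) = f (1 - (D : ℤ)) + f (-(D : ℤ)) := by
    have hvan : ∀ n ∉ Finset.range 2, f (-(D : ℤ) + 1 - n) = 0 := by
      intro n hn
      apply hfsupp
      simp only [Finset.mem_range, not_lt] at hn
      omega
    have h2 := hasSum_sum_of_ne_finset_zero (L := SummationFilter.unconditional ℕ) hvan
    rw [Finset.sum_range_succ, Finset.sum_range_one] at h2
    have := (hFN (-(D : ℤ) + 1)).unique h2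
    have a1 : (-(D:ℤ) + 1 - ((0:ℕ):ℤ)) = 1 - D := by push_cast; ring
    have a2 : (-(D:ℤ) + 1 - ((1:ℕ):ℤ)) = -(D:ℤ) := by push_cast; ring
    rw [this, a1, a2]
  -- final computation
  refine mul_left_cancel₀ heprod_ne ?_
  rw [hFN1, Finset.prod_inv_distrib, ← hPm]
  push_cast
  field_simp
  refine mul_left_cancel₀ (mul_ne_zero hfD0 heprod_ne) ?_
  linear_combination ((f (-(D : ℤ)) : ℂ)) * Pm * hv1
    + ((f (-(D : ℤ)) : ℂ)) * (e (D - 1) - e (D - 2)) * hv0'
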